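/- Existence of countably generated intermediate subgroups with disjointly translated supports. Let G be a group, and let E and Z be G-sets such that E is G-quasifree and some element of Map(E,Z) is stabilized by every element of G under the conjugation action. Let v₀ ∈ Map(E,Z) satisfy g·v₀ =ₐ v₀ for every g ∈ G. Let H ≤ K be subgroups of G such that: for each g ∈ G − H, (g·E_H) ∩ E_H = ∅; and rank(K rel H) < ω₀, i.e. there exists a finite subset S with Subgroup.closure (S ∪ H) = K. Then there exists a subgroup L of G with K ≤ L, such that rank(L rel H) ≤ ω₀ (there exists a countable subset S' with Subgroup.closure (S' ∪ H) = L) and, for each g ∈ G − L, (g·E_L) ∩ E_L = ∅. -/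

import Mathlib

/-- For a subset `K` of `G`, `EK v₀ K` is the set of `e ∈ E` such that the function
`K → Z`, `k ↦ ⟨k·v₀, e⟩ = k • v₀ (k⁻¹ • e)`, is not constant. -/
def EK {G E Z : Type*} [Group G] [MulAction G E] [MulAction G Z]
    (v₀ : E → Z) (K : Set G) : Set E :=
  {e : E | ∃ k₁ ∈ K, ∃ k₂ ∈ K, k₁ • v₀ (k₁⁻¹ • e) ≠ k₂ • v₀ (k₂⁻¹ • e)}

section Aux

open Set Subgroup

variable {G E Z : Type*} [Group G] [MulAction G E] [MulAction G Z]

/-- The difference set of `g`: points where `g • v₀` differs from `v₀`. -/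
def Dset (v₀ : E → Z) (g : G) : Set E := {e | g • v₀ (g⁻¹ • e) ≠ v₀ e}

lemma mem_EK_iff {v₀ : E → Z} {K : Subgroup G} {e : E} :
    e ∈ EK v₀ (K : Set G) ↔ ∃ k ∈ K, e ∈ Dset v₀ k := by
  constructor
  · rintro ⟨k₁, h₁, k₂, h₂, hne⟩
    by_cases h : e ∈ Dset v₀ k₁
    · exact ⟨k₁, h₁, h⟩
    · refine ⟨k₂, h₂, fun h2 => ?_⟩
      simp only [Dset, mem_setOf_eq, not_not] at h h2
      exact hne (h.trans h2.symm)
  · rintro ⟨k, hk, he⟩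
    refine ⟨k, hk, 1, one_mem _, ?_⟩
    simpa [Dset] using he

lemma Dset_inv_mem {v₀ : E → Z} {g : G} {e : E} (he : e ∈ Dset v₀ g⁻¹) :
    g • e ∈ Dset v₀ g := by
  simp only [Dset, mem_setOf_eq, inv_inv] at he ⊢
  rw [inv_smul_smul]
  intro h
  apply he
  rw [← h, inv_smul_smul]

lemma Dset_mul_mem {v₀ : E → Z} {g h : G} {e : E} (he : e ∈ Dset v₀ (g * h)) :
    e ∈ Dset v₀ g ∨ g⁻¹ • e ∈ Dset v₀ h := by
  by_contra hc
  push_neg at hc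
  obtain ⟨h1, h2⟩ := hc
  simp only [Dset, mem_setOf_eq, not_not] at h1 h2
  apply he
  show (g * h) • v₀ ((g * h)⁻¹ • e) = v₀ e
  rw [mul_inv_rev, mul_smul, mul_smul, h2, h1]

/-- Decomposition: for `K' = ⟨S ∪ H⟩`, every difference set of an element of `K'`
is contained in the union of `K'`-translates of `⋃ s ∈ S, Dset v₀ s` and of `EK v₀ H`. -/
lemma Dset_subset_decomp (v₀ : E → Z) (H : Subgroup G) (S : Set G)
    {k : G} (hk : k ∈ Subgroup.closure (S ∪ (H : Set G))) :
    Dset v₀ k ⊆ {e | ∃ k₀ ∈ Subgroup.closure (S ∪ (H : Set G)),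
      k₀⁻¹ • e ∈ (⋃ s ∈ S, Dset v₀ s) ∪ EK v₀ (H : Set G)} := by
  induction hk using Subgroup.closure_induction with
  | mem x hx =>
    intro e he
    refine ⟨1, one_mem _, ?_⟩
    simp only [inv_one, one_smul]
    rcases hx with hx | hx
    · exact Or.inl (Set.mem_biUnion hx he)
    · refine Or.inr ⟨x, hx, 1, ?_, ?_⟩
      · exact SetLike.mem_coe.mpr (one_mem H)
      · simpa [Dset] using he
  | one =>
    intro e he
    simp [Dset] at he
  | mul x y hx hy ihx ihy =>
    intro e he
    rcases Dset_mul_mem he with h | h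
    · exact ihx h
    · obtain ⟨k₀, hk₀, hb⟩ := ihy h
      refine ⟨x * k₀, mul_mem hx hk₀, ?_⟩
      rw [mul_inv_rev, mul_smul]
      exact hb
  | inv x hx ih =>
    intro e he
    obtain ⟨k₀, hk₀, hb⟩ := ih (Dset_inv_mem he)
    refine ⟨x⁻¹ * k₀, mul_mem (inv_mem hx) hk₀, ?_⟩
    rw [mul_inv_rev, mul_smul, inv_inv]
    exact hb

lemma transporter_countable (hE : ∀ e : E, {g : G | g • e = e}.Finite) (f f' : E) :
    {x : G | x • f = f'}.Countable := by
  rcases Set.eq_empty_or_nonempty {x : G | x • f = f'} with h | ⟨x₀, hx₀⟩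
  · simp [h]
  · have hsub : {x : G | x • f = f'} ⊆ (fun y => x₀ * y) '' {g : G | g • f = f} := by
      intro x hx
      refine ⟨x₀⁻¹ * x, ?_, by group⟩
      show (x₀⁻¹ * x) • f = f
      rw [mul_smul, hx, ← hx₀, inv_smul_smul]
    exact (((hE f).image _).subset hsub).countable

lemma eh_unique {v₀ : E → Z} {H : Subgroup G}
    (hdisj : ∀ g : G, g ∉ H →
      ((fun x => g • x) '' EK v₀ (H : Set G)) ∩ EK v₀ (H : Set G) = ∅)
    {z : G} {a : E} (ha : a ∈ EK v₀ (H : Set G)) (hza : z • a ∈ EK v₀ (H : Set G)) :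
    z ∈ H := by
  by_contra hz
  have hmem : z • a ∈ ((fun x => z • x) '' EK v₀ (H : Set G)) ∩ EK v₀ (H : Set G) :=
    ⟨⟨a, ha, rfl⟩, hza⟩
  rw [hdisj z hz] at hmem
  exact hmem

/-- The key step: any subgroup `K'` countably generated over `H` is contained in a
subgroup `K''` countably generated over `H` which absorbs all `g` translating
`EK v₀ K'` non-disjointly. -/
lemma step_lemma (hE : ∀ e : E, {g : G | g • e = e}.Finite)
    (v₀ : E → Z) (hv₀ : ∀ g : G, {e : E | g • v₀ (g⁻¹ • e) ≠ v₀ e}.Finite)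
    (H : Subgroup G)
    (hdisj : ∀ g : G, g ∉ H →
      ((fun x => g • x) '' EK v₀ (H : Set G)) ∩ EK v₀ (H : Set G) = ∅)
    (K' : Subgroup G)
    (hP : ∃ S : Set G, S.Countable ∧ Subgroup.closure (S ∪ (H : Set G)) = K') :
    ∃ K'' : Subgroup G,
      (∃ S : Set G, S.Countable ∧ Subgroup.closure (S ∪ (H : Set G)) = K'') ∧
      K' ≤ K'' ∧
      ∀ g : G, (∃ e : E, e ∈ EK v₀ (K' : Set G) ∧ g • e ∈ EK v₀ (K' : Set G)) →
        g ∈ K'' := by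
  classical
  obtain ⟨S, hSc, hScl⟩ := hP
  -- the countable set of "new support points"
  set Fs : Set E := ⋃ s ∈ S, Dset v₀ s with hFs
  have hFsc : Fs.Countable := hSc.biUnion (fun s _ => (hv₀ s).countable)
  -- choice of a representative sending a given point into EK v₀ H, when one exists
  set pick : E → G := fun f =>
    if h : ∃ x : G, x • f ∈ EK v₀ (H : Set G) then h.choose else 1 with hpick
  have hpick_spec : ∀ f : E, (∃ x : G, x • f ∈ EK v₀ (H : Set G)) →
      pick f • f ∈ EK v₀ (H : Set G) := by
    intro f hf
    rw [hpick]
    simp only [dif_pos hf]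
    exact hf.choose_spec
  -- the countable set of new generators
  set R : Set G := (⋃ f ∈ Fs, ⋃ f' ∈ Fs, {x : G | x • f = f'}) ∪ pick '' Fs with hR
  have hRc : R.Countable := by
    refine Set.Countable.union ?_ (hFsc.image _)
    exact hFsc.biUnion fun f _ => hFsc.biUnion fun f' _ => transporter_countable hE f f'
  set K'' : Subgroup G := Subgroup.closure ((R ∪ S) ∪ (H : Set G)) with hK''
  have hK'le : K' ≤ K'' := by
    rw [← hScl, hK'']
    exact Subgroup.closure_mono (by
      intro x hx
      rcases hx with h | h
      · exact Or.inl (Or.inr h)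
      · exact Or.inr h)
  have hHle : H ≤ K' := by
    rw [← hScl]
    intro h hh
    exact Subgroup.subset_closure (Or.inr hh)
  have hHle'' : H ≤ K'' := hHle.trans hK'le
  have hRle : ∀ x ∈ R, x ∈ K'' := fun x hx =>
    Subgroup.subset_closure (Or.inl (Or.inl hx))
  refine ⟨K'', ⟨R ∪ S, hRc.union hSc, hK''.symm⟩, hK'le, ?_⟩
  rintro g ⟨e, he, hge⟩
  -- decompose both e and g • e
  have hdec : ∀ {e' : E}, e' ∈ EK v₀ (K' : Set G) →
      ∃ k₀ ∈ K', k₀⁻¹ • e' ∈ Fs ∪ EK v₀ (H : Set G) := by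
    intro e' he'
    obtain ⟨k, hk, hDk⟩ := mem_EK_iff.mp he'
    rw [← hScl] at hk
    obtain ⟨k₀, hk₀, hb⟩ := Dset_subset_decomp v₀ H S hk hDk
    exact ⟨k₀, hScl ▸ hk₀, hb⟩
  obtain ⟨k₁, hk₁, hb₁⟩ := hdec he
  obtain ⟨k₂, hk₂, hb₂⟩ := hdec hge
  set a₁ : E := k₁⁻¹ • e with ha₁
  set a₂ : E := k₂⁻¹ • (g • e) with ha₂
  set x : G := k₂⁻¹ * g * k₁ with hx
  have hxa : x • a₁ = a₂ := by
    rw [hx, ha₁, ha₂, smul_smul, mul_inv_cancel_right, mul_smul]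
  have hgx : g = k₂ * x * k₁⁻¹ := by rw [hx]; group
  -- it suffices to show x ∈ K''
  suffices hxK : x ∈ K'' by
    rw [hgx]
    exact mul_mem (mul_mem (hK'le hk₂) hxK) (inv_mem (hK'le hk₁))
  rcases hb₁ with hfa₁ | hha₁ <;> rcases hb₂ with hfa₂ | hha₂
  · -- both in Fs : x lies in a transporter set
    refine hRle x (Or.inl ?_)
    exact Set.mem_biUnion hfa₁ (Set.mem_biUnion hfa₂ hxa)
  · -- a₁ ∈ Fs, a₂ ∈ EK H : x lies in H • pick a₁
    have hex : ∃ y : G, y • a₁ ∈ EK v₀ (H : Set G) := ⟨x, hxa ▸ hha₂⟩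
    have hx₀ := hpick_spec a₁ hex
    have hzH : x * (pick a₁)⁻¹ ∈ H := by
      refine eh_unique hdisj hx₀ ?_
      rw [smul_smul, inv_mul_cancel_right, hxa]
      exact hha₂
    have : x = (x * (pick a₁)⁻¹) * pick a₁ := by group
    rw [this]
    exact mul_mem (hHle'' hzH) (hRle _ (Or.inr ⟨a₁, hfa₁, rfl⟩))
  · -- a₁ ∈ EK H, a₂ ∈ Fs : x⁻¹ lies in H • pick a₂
    have hinv : x⁻¹ • a₂ ∈ EK v₀ (H : Set G) := by
      rw [← hxa, inv_smul_smul]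
      exact hha₁
    have hex : ∃ y : G, y • a₂ ∈ EK v₀ (H : Set G) := ⟨x⁻¹, hinv⟩
    have hx₀ := hpick_spec a₂ hex
    have hzH : x⁻¹ * (pick a₂)⁻¹ ∈ H := by
      refine eh_unique hdisj hx₀ ?_
      rw [smul_smul, inv_mul_cancel_right]
      exact hinv
    have : x = ((x⁻¹ * (pick a₂)⁻¹) * pick a₂)⁻¹ := by group
    rw [this]
    exact inv_mem (mul_mem (hHle'' hzH) (hRle _ (Or.inr ⟨a₂, hfa₂, rfl⟩)))
  · -- both in EK H : x ∈ H
    have : x ∈ H := eh_unique hdisj hha₁ (hxa ▸ hha₂)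
    exact hHle'' this

end Aux

/-- **Existence of countably generated intermediate subgroups with disjointly
translated supports.** -/
theorem exists_countably_generated_intermediate
    {G E Z : Type*} [Group G] [MulAction G E] [MulAction G Z]
    (hE : ∀ e : E, {g : G | g • e = e}.Finite)
    (hmap : ∃ u : E → Z, ∀ (g : G) (e : E), g • u (g⁻¹ • e) = u e)
    (v₀ : E → Z)
    (hv₀ : ∀ g : G, {e : E | g • v₀ (g⁻¹ • e) ≠ v₀ e}.Finite)
    (H K : Subgroup G) (hHK : H ≤ K)
    (hdisj : ∀ g : G, g ∉ H →
      ((fun x => g • x) '' EK v₀ (H : Set G)) ∩ EK v₀ (H : Set G) = ∅)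
    (hfg : ∃ S : Finset G, Subgroup.closure (↑S ∪ (H : Set G)) = K) :
    ∃ L : Subgroup G, K ≤ L ∧
      (∃ S' : Set G, S'.Countable ∧ Subgroup.closure (S' ∪ (H : Set G)) = L) ∧
      ∀ g : G, g ∉ L →
        ((fun x => g • x) '' EK v₀ (L : Set G)) ∩ EK v₀ (L : Set G) = ∅ := by
  classical
  set P : Subgroup G → Prop :=
    fun K' => ∃ S : Set G, S.Countable ∧ Subgroup.closure (S ∪ (H : Set G)) = K' with hP
  have hPK : P K := by
    obtain ⟨S₀, hS₀⟩ := hfg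
    exact ⟨↑S₀, S₀.finite_toSet.countable, hS₀⟩
  have hstep := step_lemma hE v₀ hv₀ H hdisj
  choose F hF1 hF2 hF3 using hstep
  -- build the increasing chain
  let seq : ℕ → {K' : Subgroup G // P K'} := fun n =>
    Nat.rec ⟨K, hPK⟩ (fun _ p => ⟨F p.1 p.2, hF1 p.1 p.2⟩) n
  have hseq_succ : ∀ n, (seq (n + 1)) = ⟨F (seq n).1 (seq n).2, hF1 (seq n).1 (seq n).2⟩ :=
    fun n => rfl
  have hmono : ∀ n, (seq n).1 ≤ (seq (n + 1)).1 := by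
    intro n
    rw [hseq_succ n]
    exact hF2 (seq n).1 (seq n).2
  have hmono' : Monotone (fun n => (seq n).1) := monotone_nat_of_le_succ hmono
  set L : Subgroup G := ⨆ n, (seq n).1 with hL
  have hKL : K ≤ L := le_iSup (fun n => (seq n).1) 0
  have hmemL : ∀ {x : G}, x ∈ L ↔ ∃ n, x ∈ (seq n).1 := by
    intro x
    exact Subgroup.mem_iSup_of_directed hmono'.directed_le
  refine ⟨L, hKL, ?_, ?_⟩
  · -- countable generation
    have hSn : ∀ n, ∃ S : Set G, S.Countable ∧
        Subgroup.closure (S ∪ (H : Set G)) = (seq n).1 := fun n => (seq n).2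
    choose Ss hSsc hSscl using hSn
    refine ⟨⋃ n, Ss n, Set.countable_iUnion hSsc, ?_⟩
    have hU : (⋃ n, Ss n) ∪ (H : Set G) = ⋃ n, (Ss n ∪ (H : Set G)) := by
      rw [Set.iUnion_union_distrib]
      congr 1
      exact (Set.iUnion_const _).symm
    rw [hU, Subgroup.closure_iUnion]
    exact iSup_congr hSscl
  · -- disjointness for g ∉ L
    intro g hgL
    by_contra hne
    obtain ⟨y, ⟨e, he, hye⟩, hy⟩ := Set.nonempty_iff_ne_empty.mpr hne
    -- he : e ∈ EK v₀ L, and g • e = y ∈ EK v₀ L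
    have hge : g • e ∈ EK v₀ (L : Set G) := by
      rw [show g • e = y from hye]; exact hy
    obtain ⟨c₁, hc₁, c₂, hc₂, hnc⟩ := he
    obtain ⟨c₃, hc₃, c₄, hc₄, hnc'⟩ := hge
    rw [SetLike.mem_coe, hmemL] at hc₁ hc₂ hc₃ hc₄
    obtain ⟨n₁, hn₁⟩ := hc₁
    obtain ⟨n₂, hn₂⟩ := hc₂
    obtain ⟨n₃, hn₃⟩ := hc₃
    obtain ⟨n₄, hn₄⟩ := hc₄
    set N := max (max n₁ n₂) (max n₃ n₄) with hN
    have h1 : c₁ ∈ (seq N).1 := hmono' (le_trans (le_max_left n₁ n₂) (le_max_left _ _)) hn₁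
    have h2 : c₂ ∈ (seq N).1 := hmono' (le_trans (le_max_right n₁ n₂) (le_max_left _ _)) hn₂
    have h3 : c₃ ∈ (seq N).1 := hmono' (le_trans (le_max_left n₃ n₄) (le_max_right _ _)) hn₃
    have h4 : c₄ ∈ (seq N).1 := hmono' (le_trans (le_max_right n₃ n₄) (le_max_right _ _)) hn₄
    have heN : e ∈ EK v₀ ((seq N).1 : Set G) := ⟨c₁, h1, c₂, h2, hnc⟩
    have hgeN : g • e ∈ EK v₀ ((seq N).1 : Set G) := ⟨c₃, h3, c₄, h4, hnc'⟩
    have hgmem : g ∈ (seq (N + 1)).1 := by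
      rw [hseq_succ N]
      exact hF3 (seq N).1 (seq N).2 g ⟨e, heN, hgeN⟩
    exact hgL (hmemL.mpr ⟨N + 1, hgmem⟩)
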